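/- If G is a subgroup of a wreath product A ≀ B = A^n ⋊ B (with B ≤ S_n permuting the n copies of A), where A and B are finite groups, then B(G) ≤ max(B(A), B(B)). -/

import Mathlib

/-- A maximal (unrefinable) chain of subgroups of `G` from `⊤` down to `⊥`: each step is
strict and admits no subgroup strictly in between. -/
def IsMaximalSubgroupChain {G : Type*} [Group G] {n : ℕ} (H : Fin (n + 1) → Subgroup G) : Prop :=
  H 0 = ⊤ ∧ H (Fin.last n) = ⊥ ∧
    ∀ i : Fin n, H i.succ < H i.castSucc ∧
      ∀ K : Subgroup G, ¬(H i.succ < K ∧ K < H i.castSucc)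

/-- The cost of a chain of subgroups: the maximum of the relative indices of its steps. -/
noncomputable def chainCost {G : Type*} [Group G] {n : ℕ} (H : Fin (n + 1) → Subgroup G) : ℕ :=
  Finset.univ.sup fun i : Fin n => (H i.succ).relIndex (H i.castSucc)

/-- The Galois width of a group `G`: the minimum cost over all maximal chains of subgroups. -/
noncomputable def galoisWidth (G : Type*) [Group G] : ℕ :=
  sInf {c : ℕ | ∃ (n : ℕ) (H : Fin (n + 1) → Subgroup G), IsMaximalSubgroupChain H ∧ chainCost H = c}

/-- The action of a permutation group `B ≤ S_n` on `A^n` by permuting the coordinates, used to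
form the wreath product `A ≀ B = Aⁿ ⋊ B`. -/
def wreathAut {n : ℕ} {A : Type*} [Group A] (B : Subgroup (Equiv.Perm (Fin n))) :
    ↥B →* MulAut (Fin n → A) where
  toFun b :=
    { toFun := fun f => f ∘ (b : Equiv.Perm (Fin n)).symm
      invFun := fun f => f ∘ (b : Equiv.Perm (Fin n))
      left_inv := fun f => by ext i; simp
      right_inv := fun f => by ext i; simp
      map_mul' := fun f g => rfl }
  map_one' := by ext f i; rfl
  map_mul' := fun b c => by ext f i; rfl


open Relation Subgroup

section Aux

variable {Γ : Type*} [Group Γ]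

/-- One maximal (unrefinable) step down in the subgroup lattice, with relative index ≤ c. -/
def SStep (c : ℕ) (X Y : Subgroup Γ) : Prop :=
  (Y < X ∧ ∀ Z : Subgroup Γ, ¬(Y < Z ∧ Z < X)) ∧ Y.relIndex X ≤ c

lemma SStep.mono {c c' : ℕ} (hcc : c ≤ c') {X Y : Subgroup Γ} (h : SStep c X Y) :
    SStep c' X Y := ⟨h.1, h.2.trans hcc⟩

lemma relindex_ne_zero' [Finite Γ] (H K : Subgroup Γ) : H.relIndex K ≠ 0 :=
  Subgroup.FiniteIndex.index_ne_zero (H := H.subgroupOf K)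

lemma exists_maxstep [Finite Γ] {L K : Subgroup Γ} (h : L < K) :
    ∃ M : Subgroup Γ, L ≤ M ∧ M < K ∧ ∀ Z : Subgroup Γ, ¬(M < Z ∧ Z < K) := by
  haveI : Finite (Subgroup Γ) := Finite.of_injective _ SetLike.coe_injective
  obtain ⟨M, hM, hmax⟩ := Set.Finite.exists_maximalFor id {M : Subgroup Γ | L ≤ M ∧ M < K}
    (Set.toFinite _) ⟨L, le_rfl, h⟩
  refine ⟨M, hM.1, hM.2, fun Z ⟨h1, h2⟩ => ?_⟩
  exact absurd (hmax ⟨hM.1.trans h1.le, h2⟩ h1.le) (not_le_of_gt h1)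

lemma refine_chain [Finite Γ] {c : ℕ} :
    ∀ (K L : Subgroup Γ), L ≤ K → L.relIndex K ≤ c → ReflTransGen (SStep c) K L := by
  have main : ∀ m (K L : Subgroup Γ), Nat.card K ≤ m → L ≤ K → L.relIndex K ≤ c →
      ReflTransGen (SStep c) K L := by
    intro m
    induction m with
    | zero =>
      intro K L hm _ _
      have := Nat.card_pos (α := ↥K)
      omega
    | succ m ih =>
      intro K L hm hLK hrel
      rcases eq_or_lt_of_le hLK with rfl | hlt
      · exact ReflTransGen.refl
      obtain ⟨M, hLM, hMK, hmax⟩ := exists_maxstep hlt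
      have hmul : L.relIndex M * M.relIndex K = L.relIndex K :=
        relIndex_mul_relIndex (H := L) (K := M) (L := K) hLM hMK.le
      have hpos : 0 < L.relIndex K := Nat.pos_of_ne_zero (relindex_ne_zero' L K)
      have h1 : M.relIndex K ≤ c :=
        le_trans (Nat.le_of_dvd hpos ⟨L.relIndex M, by rw [← hmul, Nat.mul_comm]⟩) hrel
      have h2 : L.relIndex M ≤ c :=
        le_trans (Nat.le_of_dvd hpos ⟨M.relIndex K, hmul.symm⟩) hrel
      have hcard : Nat.card M ≤ m := by
        have : Nat.card M < Nat.card K := by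
          have eM : Nat.card ↥M = (M : Set Γ).ncard := Nat.card_coe_set_eq _
          have eK : Nat.card ↥K = (K : Set Γ).ncard := Nat.card_coe_set_eq _
          rw [eM, eK]
          exact Set.ncard_lt_ncard (by exact_mod_cast hMK) (Set.toFinite _)
        omega
      exact ReflTransGen.head ⟨⟨hMK, hmax⟩, h1⟩ (ih M L hcard hLM h2)
  exact fun K L => main (Nat.card K) K L le_rfl

lemma rtg_to_chain {c : ℕ} {K L : Subgroup Γ} (h : ReflTransGen (SStep c) K L) :
    ∃ (m : ℕ) (H : Fin (m + 1) → Subgroup Γ), H 0 = K ∧ H (Fin.last m) = L ∧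
      ∀ i : Fin m, SStep c (H i.castSucc) (H i.succ) := by
  induction h using ReflTransGen.head_induction_on with
  | refl => exact ⟨0, fun _ => L, rfl, rfl, fun i => i.elim0⟩
  | @head a b hab _ ih =>
    obtain ⟨m, H, h0, hl, hs⟩ := ih
    refine ⟨m + 1, Fin.cases a H, by simp, ?_, ?_⟩
    · rw [← Fin.succ_last]; exact (Fin.cases_succ ..).trans hl
    · intro i
      induction i using Fin.cases with
      | zero =>
        have e1 : (Fin.cases a H : Fin (m + 2) → Subgroup Γ) (0 : Fin (m + 1)).castSucc = a := rfl
        have e2 : (Fin.cases a H : Fin (m + 2) → Subgroup Γ) (0 : Fin (m + 1)).succ = H 0 :=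
          Fin.cases_succ _
        rw [e1, e2, h0]; exact hab
      | succ j =>
        have e1 : (Fin.cases a H : Fin (m+2) → Subgroup Γ) j.succ.castSucc = H j.castSucc := by
          rw [← Fin.succ_castSucc]; exact Fin.cases_succ ..
        have e2 : (Fin.cases a H : Fin (m+2) → Subgroup Γ) j.succ.succ = H j.succ :=
          Fin.cases_succ ..
        rw [e1, e2]; exact hs j

lemma galoisWidth_le_of_rtg {c : ℕ} (h : ReflTransGen (SStep c) (⊤ : Subgroup Γ) ⊥) :
    galoisWidth Γ ≤ c := by
  obtain ⟨m, H, h0, hl, hs⟩ := rtg_to_chain h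
  have hmax : IsMaximalSubgroupChain H := ⟨h0, hl, fun i => (hs i).1⟩
  refine le_trans (Nat.sInf_le ⟨m, H, hmax, rfl⟩) ?_
  exact Finset.sup_le fun i _ => (hs i).2

lemma chain_to_rtg {m : ℕ} (H : Fin (m + 1) → Subgroup Γ) (hc : IsMaximalSubgroupChain H) :
    ReflTransGen (SStep (chainCost H)) (⊤ : Subgroup Γ) ⊥ := by
  have key : ∀ j : Fin (m + 1), ReflTransGen (SStep (chainCost H)) (H 0) (H j) := by
    intro j
    induction j using Fin.induction with
    | zero => exact ReflTransGen.refl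
    | succ j ihj =>
      exact ihj.tail ⟨(hc.2.2 j),
        Finset.le_sup (f := fun i : Fin m => (H i.succ).relIndex (H i.castSucc))
          (Finset.mem_univ j)⟩
  have := key (Fin.last m)
  rwa [hc.1, hc.2.1] at this

lemma exists_rtg_galoisWidth (Γ : Type*) [Group Γ] [Finite Γ] :
    ReflTransGen (SStep (galoisWidth Γ)) (⊤ : Subgroup Γ) ⊥ := by
  have hne : {c : ℕ | ∃ (n : ℕ) (H : Fin (n + 1) → Subgroup Γ),
      IsMaximalSubgroupChain H ∧ chainCost H = c}.Nonempty := by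
    obtain ⟨m, H, h0, hl, hs⟩ := rtg_to_chain
      (refine_chain (⊤ : Subgroup Γ) ⊥ bot_le le_rfl)
    exact ⟨chainCost H, m, H, ⟨h0, hl, fun i => (hs i).1⟩, rfl⟩
  obtain ⟨m, H, hmax, hcost⟩ := Nat.sInf_mem hne
  rw [show galoisWidth Γ = chainCost H from hcost.symm]
  exact chain_to_rtg H hmax

end Aux

section Transfer

variable {W Q N : Type*} [Group W] [Group Q] [Group N]

lemma SStep.comap_surj (f : W →* Q) (hf : Function.Surjective f) {c : ℕ}
    {X Y : Subgroup Q} (h : SStep c X Y) : SStep c (X.comap f) (Y.comap f) := by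
  obtain ⟨⟨hlt, hmax⟩, hrel⟩ := h
  refine ⟨⟨lt_of_le_of_ne (comap_mono hlt.le)
      (fun e => hlt.ne (comap_injective hf e)), ?_⟩, ?_⟩
  · rintro Z ⟨h1, h2⟩
    have hker : f.ker ≤ Z := le_trans (by rw [← MonoidHom.comap_bot f]; exact comap_mono bot_le) h1.le
    have hZ : Z = comap f (map f Z) := (comap_map_eq_self hker).symm
    refine hmax (map f Z) ⟨lt_of_le_of_ne ?_ ?_, lt_of_le_of_ne ?_ ?_⟩
    · calc Y = map f (comap f Y) := (map_comap_eq_self_of_surjective hf Y).symm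
        _ ≤ map f Z := map_mono h1.le
    · intro e; exact h1.ne (by rw [e, ← hZ])
    · calc map f Z ≤ map f (comap f X) := map_mono h2.le
        _ = X := map_comap_eq_self_of_surjective hf X
    · intro e; exact h2.ne (by rw [hZ, e])
  · rwa [relIndex_comap, map_comap_eq_self_of_surjective hf]

lemma SStep.map_inj (f : N →* W) (hf : Function.Injective f) {c : ℕ}
    {X Y : Subgroup N} (h : SStep c X Y) : SStep c (X.map f) (Y.map f) := by
  obtain ⟨⟨hlt, hmax⟩, hrel⟩ := h
  refine ⟨⟨lt_of_le_of_ne (map_mono hlt.le)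
      (fun e => hlt.ne (map_injective hf e)), ?_⟩, ?_⟩
  · rintro Z ⟨h1, h2⟩
    have hZ : map f (comap f Z) = Z := map_comap_eq_self (h2.le.trans (map_le_range f X))
    refine hmax (comap f Z) ⟨lt_of_le_of_ne ?_ ?_, lt_of_le_of_ne ?_ ?_⟩
    · calc Y = comap f (map f Y) := (comap_map_eq_self_of_injective hf Y).symm
        _ ≤ comap f Z := comap_mono h1.le
    · intro e; exact h1.ne (by rw [e, hZ])
    · calc comap f Z ≤ comap f (map f X) := comap_mono h2.le
        _ = X := comap_map_eq_self_of_injective hf X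
    · intro e; exact h2.ne (by rw [← hZ, e])
  · have key : (Y.map f).relIndex (X.map f) = Y.relIndex X := by
      have := (relIndex_comap (H := Y.map f) f X).symm
      rwa [comap_map_eq_self_of_injective hf] at this
    rwa [key]

end Transfer

section Pi

variable {n : ℕ} {A : Type*} [Group A]

/-- The subgroup of `Aⁿ` that is trivial below coordinate `k`, `D` at `k`, full above. -/
def piFam (n : ℕ) (A : Type*) [Group A] (k : ℕ) (D : Subgroup A) : Subgroup (Fin n → A) :=
  Subgroup.pi Set.univ fun i => if (i : ℕ) < k then ⊥ else if (i : ℕ) = k then D else ⊤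

lemma mem_piFam {k : ℕ} {D : Subgroup A} {f : Fin n → A} :
    f ∈ piFam n A k D ↔ ∀ i : Fin n,
      f i ∈ (if (i : ℕ) < k then ⊥ else if (i : ℕ) = k then D else (⊤ : Subgroup A)) := by
  simp [piFam, Subgroup.mem_pi]

lemma mem_piFam_lt {k : ℕ} {D : Subgroup A} {f : Fin n → A} (hf : f ∈ piFam n A k D)
    {i : Fin n} (hi : (i : ℕ) < k) : f i = 1 := by
  have := mem_piFam.mp hf i; rw [if_pos hi] at this; simpa using this

lemma mem_piFam_eq {k : ℕ} {D : Subgroup A} {f : Fin n → A} (hf : f ∈ piFam n A k D)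
    {i : Fin n} (hi : (i : ℕ) = k) : f i ∈ D := by
  have := mem_piFam.mp hf i; rw [if_neg (by omega), if_pos hi] at this; exact this

lemma mem_piFam_of (k : ℕ) (D : Subgroup A) (f : Fin n → A)
    (h1 : ∀ i : Fin n, (i : ℕ) < k → f i = 1)
    (h2 : ∀ i : Fin n, (i : ℕ) = k → f i ∈ D) : f ∈ piFam n A k D := by
  rw [mem_piFam]; intro i
  split_ifs with ha hb
  · simpa using h1 i ha
  · exact h2 i hb
  · trivial

lemma piFam_zero_top : piFam n A 0 ⊤ = ⊤ :=
  top_unique fun f _ => mem_piFam_of _ _ _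
    (fun _ hi => absurd hi (Nat.not_lt_zero _)) (fun _ _ => trivial)

lemma piFam_bot_succ (k : ℕ) : piFam n A k ⊥ = piFam n A (k + 1) ⊤ := by
  ext f
  constructor
  · intro hf
    refine mem_piFam_of _ _ _ (fun i hi => ?_) (fun _ _ => trivial)
    rcases Nat.lt_or_ge (i : ℕ) k with h | h
    · exact mem_piFam_lt hf h
    · have : (i : ℕ) = k := by omega
      simpa using mem_piFam_eq hf this
  · intro hf
    refine mem_piFam_of _ _ _ (fun i hi => mem_piFam_lt hf (by omega)) (fun i hi => ?_)
    have : f i = 1 := mem_piFam_lt hf (by omega)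
    simp [this]

lemma piFam_n_bot (D : Subgroup A) : piFam n A n D = ⊥ := by
  ext f
  simp only [Subgroup.mem_bot]
  constructor
  · intro hf; funext i; exact mem_piFam_lt hf i.isLt
  · rintro rfl
    exact mem_piFam_of _ _ _ (fun i _ => rfl) (fun i _ => one_mem D)

lemma mulSingle_mem_piFam {k : ℕ} (hk : k < n) {D : Subgroup A} {m : A} :
    (Pi.mulSingle (⟨k, hk⟩ : Fin n) m : Fin n → A) ∈ piFam n A k D ↔ m ∈ D := by
  constructor
  · intro h
    have := mem_piFam_eq h (i := (⟨k, hk⟩ : Fin n)) rfl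
    rwa [Pi.mulSingle_eq_same] at this
  · intro hm
    refine mem_piFam_of _ _ _ (fun i hi => ?_) (fun i hi => ?_)
    · exact Pi.mulSingle_eq_of_ne (M := fun _ : Fin n => A)
        (Fin.ne_of_val_ne (Nat.ne_of_lt hi)) m
    · rw [show i = (⟨k, hk⟩ : Fin n) from Fin.ext hi, Pi.mulSingle_eq_same]; exact hm

lemma piFam_mono {k : ℕ} {D D' : Subgroup A} (h : D ≤ D') :
    piFam n A k D ≤ piFam n A k D' := fun f hf =>
  mem_piFam_of _ _ _ (fun _ hi => mem_piFam_lt hf hi) (fun _ hi => h (mem_piFam_eq hf hi))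

lemma piFam_strictMono {k : ℕ} (hk : k < n) {D D' : Subgroup A} (h : D < D') :
    piFam n A k D < piFam n A k D' := by
  refine lt_of_le_of_ne (piFam_mono h.le) ?_
  obtain ⟨m, hm, hm'⟩ := SetLike.exists_of_lt h
  intro e
  have h1 : (Pi.mulSingle (⟨k, hk⟩ : Fin n) m : Fin n → A) ∈ piFam n A k D' :=
    (mulSingle_mem_piFam hk).mpr hm
  rw [← e] at h1
  exact hm' ((mulSingle_mem_piFam hk).mp h1)

lemma trunc_mem {k : ℕ} (D : Subgroup A) (f : Fin n → A) :
    (fun i : Fin n => if (i : ℕ) ≤ k then 1 else f i) ∈ piFam n A k D := by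
  refine mem_piFam_of _ _ _ (fun i hi => ?_) (fun i hi => ?_)
  · simp only [if_pos hi.le]
  · simp only [if_pos (le_of_eq hi)]; exact one_mem D

set_option maxHeartbeats 1000000 in
lemma SStep.piFam_step {k : ℕ} (hk : k < n) {c : ℕ} {X Y : Subgroup A} (h : SStep c X Y) :
    SStep c (piFam n A k X) (piFam n A k Y) := by
  obtain ⟨⟨hlt, hmax⟩, hrel⟩ := h
  have hYX : Y ≤ X := hlt.le
  set kf : Fin n := ⟨k, hk⟩ with hkf
  have hne_lt : ∀ {i : Fin n}, (i : ℕ) < k → i ≠ kf := by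
    intro i hik e; subst e; simp [hkf] at hik
  have hne_gt : ∀ {i : Fin n}, k < (i : ℕ) → i ≠ kf := by
    intro i hik e; subst e; simp [hkf] at hik
  refine ⟨⟨piFam_strictMono hk hlt, ?_⟩, ?_⟩
  · rintro Z ⟨h1, h2⟩
    have hsingle : ∀ f, f ∈ Z → Pi.mulSingle kf (f kf) ∈ Z := by
      intro f hf
      have hfX : f ∈ piFam n A k X := h2.le hf
      have hg : (fun i : Fin n => if (i : ℕ) ≤ k then 1 else f i) ∈ Z := h1.le (trunc_mem Y f)
      have he : Pi.mulSingle kf (f kf) = f * (fun i : Fin n => if (i : ℕ) ≤ k then 1 else f i)⁻¹ := by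
        funext i
        rcases lt_trichotomy (i : ℕ) k with hik | hik | hik
        · simp [Pi.mulSingle_eq_of_ne (hne_lt hik), if_pos hik.le, mem_piFam_lt hfX hik]
        · rw [show i = kf from Fin.ext hik]
          simp [hkf]
        · simp [Pi.mulSingle_eq_of_ne (hne_gt hik), if_neg (by omega : ¬ (i : ℕ) ≤ k)]
      rw [he]; exact Z.mul_mem hf (Z.inv_mem hg)
    set M : Subgroup A := Z.map (Pi.evalMonoidHom (fun _ : Fin n => A) kf) with hM
    have hZM : Z = piFam n A k M := by
      apply le_antisymm
      · intro f hf
        refine mem_piFam_of _ _ _ (fun i hi => mem_piFam_lt (h2.le hf) hi) (fun i hi => ?_)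
        rw [show i = kf from Fin.ext hi]
        exact Subgroup.mem_map.mpr ⟨f, hf, rfl⟩
      · intro f hf
        obtain ⟨f', hf', hev⟩ := Subgroup.mem_map.mp (mem_piFam_eq hf (i := kf) rfl)
        have h1' : Pi.mulSingle kf (f kf) ∈ Z := by
          have := hsingle f' hf'
          rwa [show f' kf = f kf from hev] at this
        have hg : (fun i : Fin n => if (i : ℕ) ≤ k then 1 else f i) ∈ Z := h1.le (trunc_mem Y f)
        have he : f = Pi.mulSingle kf (f kf) * fun i : Fin n => if (i : ℕ) ≤ k then 1 else f i := by
          funext i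
          rcases lt_trichotomy (i : ℕ) k with hik | hik | hik
          · simp [Pi.mulSingle_eq_of_ne (hne_lt hik), if_pos hik.le, mem_piFam_lt hf hik]
          · rw [show i = kf from Fin.ext hik]
            simp [hkf]
          · simp [Pi.mulSingle_eq_of_ne (hne_gt hik), if_neg (by omega : ¬ (i : ℕ) ≤ k)]
        rw [he]; exact Z.mul_mem h1' hg
    refine hmax M ⟨lt_of_le_of_ne ?_ ?_, lt_of_le_of_ne ?_ ?_⟩
    · intro m hm
      have hmem : Pi.mulSingle kf m ∈ piFam n A k M := hZM ▸ h1.le ((mulSingle_mem_piFam hk).mpr hm)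
      exact (mulSingle_mem_piFam hk).mp hmem
    · intro e; exact h1.ne (by rw [hZM, ← e])
    · intro m hm
      obtain ⟨f', hf', hev⟩ := Subgroup.mem_map.mp hm
      have := mem_piFam_eq (h2.le hf') (i := kf) rfl
      rwa [show f' kf = m from hev] at this
    · intro e; exact h2.ne (by rw [hZM, e])
  · have hsub : piFam n A k Y =
        (Y.comap (Pi.evalMonoidHom (fun _ : Fin n => A) kf)) ⊓ piFam n A k X := by
      ext f
      rw [Subgroup.mem_inf]
      constructor
      · intro hf
        exact ⟨Subgroup.mem_comap.mpr (mem_piFam_eq hf (i := kf) rfl), piFam_mono hYX hf⟩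
      · rintro ⟨hf1, hf2⟩
        refine mem_piFam_of _ _ _ (fun i hi => mem_piFam_lt hf2 hi) (fun i hi => ?_)
        rw [show i = kf from Fin.ext hi]
        exact Subgroup.mem_comap.mp hf1
    rw [hsub, inf_relIndex_right, relIndex_comap]
    have hmap : Subgroup.map (Pi.evalMonoidHom (fun _ : Fin n => A) kf) (piFam n A k X) = X := by
      apply le_antisymm
      · rintro m hm
        obtain ⟨f, hf, hev⟩ := Subgroup.mem_map.mp hm
        have := mem_piFam_eq hf (i := kf) rfl
        rwa [show f kf = m from hev] at this
      · intro m hm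
        exact Subgroup.mem_map.mpr
          ⟨Pi.mulSingle kf m, (mulSingle_mem_piFam hk).mpr hm, Pi.mulSingle_eq_same _ _⟩
    rw [hmap]; exact hrel

lemma pi_chain {c : ℕ} (n : ℕ) (h : ReflTransGen (SStep c) (⊤ : Subgroup A) ⊥) :
    ReflTransGen (SStep c) (⊤ : Subgroup (Fin n → A)) ⊥ := by
  have key : ∀ k, k ≤ n → ReflTransGen (SStep c) (⊤ : Subgroup (Fin n → A)) (piFam n A k ⊤) := by
    intro k
    induction k with
    | zero => intro _; rw [piFam_zero_top]
    | succ k ih =>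
      intro hk1
      refine (ih (by omega)).trans ?_
      rw [← piFam_bot_succ]
      exact ReflTransGen.lift (piFam n A k) (fun X Y hXY => hXY.piFam_step (by omega)) _ _ h
  have := key n le_rfl
  rwa [piFam_n_bot] at this

end Pi

section Ambient

variable {W : Type*} [Group W]

lemma galoisWidth_le_of_ambient [Finite W] (G : Subgroup W) {c : ℕ}
    (h : ReflTransGen (SStep c) (⊤ : Subgroup W) ⊥) : galoisWidth ↥G ≤ c := by
  have hstep : ∀ X Y : Subgroup W, SStep c X Y →
      (Y.comap G.subtype ≤ X.comap G.subtype ∧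
        (Y.comap G.subtype).relIndex (X.comap G.subtype) ≤ c) := by
    intro X Y hXY
    refine ⟨comap_mono hXY.1.1.le, ?_⟩
    rw [relIndex_comap]
    exact le_trans (relIndex_le_of_le_right (map_comap_le _ _) (relindex_ne_zero' Y X)) hXY.2
  have hweak : ReflTransGen (fun X Y : Subgroup ↥G => Y ≤ X ∧ Y.relIndex X ≤ c)
      ((⊤ : Subgroup W).comap G.subtype) ((⊥ : Subgroup W).comap G.subtype) :=
    ReflTransGen.lift _ hstep _ _ h
  rw [comap_top, MonoidHom.comap_bot, Subgroup.ker_subtype] at hweak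
  have hstrong : ∀ P L : Subgroup ↥G,
      ReflTransGen (fun X Y : Subgroup ↥G => Y ≤ X ∧ Y.relIndex X ≤ c) P L →
      ReflTransGen (SStep c) P L := by
    intro P L hPL
    induction hPL with
    | refl => exact .refl
    | tail _ hbc ih => exact ih.trans (refine_chain _ _ hbc.1 hbc.2)
  exact galoisWidth_le_of_rtg (hstrong _ _ hweak)

end Ambient

/-- If `G` is a subgroup of a wreath product `A ≀ B = Aⁿ ⋊ B` (with
`B ≤ S_n` permuting the `n` copies of the finite group `A`), then
`B(G) ≤ max (B(A)) (B(B))`. -/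
theorem stmt19 (n : ℕ) (A : Type*) [Group A] [Finite A] (B : Subgroup (Equiv.Perm (Fin n)))
    (G : Subgroup ((Fin n → A) ⋊[wreathAut B] ↥B)) :
    galoisWidth ↥G ≤ max (galoisWidth A) (galoisWidth ↥B) := by
  haveI : Finite ((Fin n → A) ⋊[wreathAut B] ↥B) :=
    Finite.of_injective (fun x => (x.left, x.right))
      (fun a b h => SemidirectProduct.ext (congrArg Prod.fst h) (congrArg Prod.snd h))
  have hB := ReflTransGen.mono
    (fun X Y h => SStep.mono (le_max_right (galoisWidth A) (galoisWidth ↥B)) h) _ _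
    (exists_rtg_galoisWidth ↥B)
  have hA := ReflTransGen.mono
    (fun X Y h => SStep.mono (le_max_left (galoisWidth A) (galoisWidth ↥B)) h) _ _
    (exists_rtg_galoisWidth A)
  have hAn := pi_chain n hA
  have htop := ReflTransGen.lift (fun X : Subgroup ↥B =>
      X.comap (SemidirectProduct.rightHom : ((Fin n → A) ⋊[wreathAut B] ↥B) →* ↥B))
    (fun X Y h => h.comap_surj _ SemidirectProduct.rightHom_surjective) _ _ hB
  simp only [Function.onFun, comap_top, MonoidHom.comap_bot] at htop
  have hbot := ReflTransGen.lift (fun X : Subgroup (Fin n → A) =>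
      X.map (SemidirectProduct.inl : (Fin n → A) →* ((Fin n → A) ⋊[wreathAut B] ↥B)))
    (fun X Y h => h.map_inj _ SemidirectProduct.inl_injective) _ _ hAn
  simp only [Function.onFun, Subgroup.map_bot, ← MonoidHom.range_eq_map,
    SemidirectProduct.range_inl_eq_ker_rightHom] at hbot
  exact galoisWidth_le_of_ambient G (htop.trans hbot)
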